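/- arXiv:1711.01256 — 2 statements merged into one kernel-verified Lean document; each statement's English description precedes it below -/
import Mathlib

section
/- Consider the system of formal power series equations over ℚ[[t]]: v₁ = 1 + t·v₁; v₅ = 1 + t·v₅ + t·v₆; v₆ = 1 + t·v₆ + t·v₅; v₂ = 1 + t·v₂ + t·v₃ + t·v₆ + t·v₅ + t·v₁; v₃ = 1 + t·v₃ + t·v₂ + t·v₅ + t·v₆ + t·v₁; v₄ = 1 + t·v₄ + 2t·v₆ + 2t·v₅; B = 1 + 2t·v₂ + 2t·v₃ + t·v₁ + 2t·v₅ + 2t·v₆ + t·v₄. Then this system has a unique solution in ℚ[[t]], and B satisfies 4Bt³ − 8Bt² − 4t³ + 5Bt − 8t² − B + 5t + 1 = 0. -/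
open PowerSeries

theorem B3_grammar_system :
    (∃! s : PowerSeries ℚ × PowerSeries ℚ × PowerSeries ℚ × PowerSeries ℚ ×
        PowerSeries ℚ × PowerSeries ℚ × PowerSeries ℚ,
      s.1 = 1 + X * s.1 ∧
      s.2.1 = 1 + X * s.2.1 + X * s.2.2.1 ∧
      s.2.2.1 = 1 + X * s.2.2.1 + X * s.2.1 ∧
      s.2.2.2.1 = 1 + X * s.2.2.2.1 + X * s.2.2.2.2.1 + X * s.2.2.1 +
        X * s.2.1 + X * s.1 ∧
      s.2.2.2.2.1 = 1 + X * s.2.2.2.2.1 + X * s.2.2.2.1 + X * s.2.1 +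
        X * s.2.2.1 + X * s.1 ∧
      s.2.2.2.2.2.1 = 1 + X * s.2.2.2.2.2.1 + 2 * X * s.2.2.1 +
        2 * X * s.2.1 ∧
      s.2.2.2.2.2.2 = 1 + 2 * X * s.2.2.2.1 + 2 * X * s.2.2.2.2.1 +
        X * s.1 + 2 * X * s.2.1 + 2 * X * s.2.2.1 + X * s.2.2.2.2.2.1) ∧
    (∀ v₁ v₅ v₆ v₂ v₃ v₄ B : PowerSeries ℚ,
      v₁ = 1 + X * v₁ →
      v₅ = 1 + X * v₅ + X * v₆ →
      v₆ = 1 + X * v₆ + X * v₅ →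
      v₂ = 1 + X * v₂ + X * v₃ + X * v₆ + X * v₅ + X * v₁ →
      v₃ = 1 + X * v₃ + X * v₂ + X * v₅ + X * v₆ + X * v₁ →
      v₄ = 1 + X * v₄ + 2 * X * v₆ + 2 * X * v₅ →
      B = 1 + 2 * X * v₂ + 2 * X * v₃ + X * v₁ + 2 * X * v₅ + 2 * X * v₆ +
        X * v₄ →
      4 * B * X ^ 3 - 8 * B * X ^ 2 - 4 * X ^ 3 + 5 * B * X - 8 * X ^ 2
        - B + 5 * X + 1 = 0) := by
  have hpc : constantCoeff (R := ℚ) (1 - X) ≠ 0 := by simp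
  have hqc : constantCoeff (R := ℚ) (1 - 2 * X) ≠ 0 := by simp
  have hpne : (1 - X : PowerSeries ℚ) ≠ 0 := fun h => hpc (by rw [h]; simp)
  have hqne : (1 - 2 * X : PowerSeries ℚ) ≠ 0 := fun h => hqc (by rw [h]; simp)
  set A : PowerSeries ℚ := (1 - X)⁻¹ with hAdef
  set C : PowerSeries ℚ := (1 - 2 * X)⁻¹ with hCdef
  have hA : (1 - X) * A = 1 := PowerSeries.mul_inv_cancel _ hpc
  have hC : (1 - 2 * X) * C = 1 := PowerSeries.mul_inv_cancel _ hqc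
  set V2 : PowerSeries ℚ := C * (1 + 2 * X * C + X * A) with hV2def
  set V4 : PowerSeries ℚ := A * (1 + 4 * X * C) with hV4def
  set BB : PowerSeries ℚ := 1 + 2 * X * V2 + 2 * X * V2 + X * A + 2 * X * C +
      2 * X * C + X * V4 with hBBdef
  constructor
  · refine ⟨(A, C, C, V2, V2, V4, BB), ⟨?_, ?_, ?_, ?_, ?_, ?_, rfl⟩, ?_⟩
    · linear_combination hA
    · linear_combination hC
    · linear_combination hC
    · linear_combination (1 + 2 * X * C + X * A) * hC
    · linear_combination (1 + 2 * X * C + X * A) * hC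
    · linear_combination (1 + 4 * X * C) * hA
    · rintro ⟨y1, y5, y6, y2, y3, y4, yB⟩ ⟨h1, h5, h6, h2, h3, h4, hB⟩
      simp only at h1 h5 h6 h2 h3 h4 hB ⊢
      have e1 : (1 - X) * y1 = (1 - X) * A := by
        rw [hA]; linear_combination h1
      have hy1 : y1 = A := mul_left_cancel₀ hpne e1
      have h56 : y6 = y5 := by linear_combination h6 - h5
      have e5 : (1 - 2 * X) * y5 = (1 - 2 * X) * C := by
        rw [hC]; linear_combination h5 + X * h56
      have hy5 : y5 = C := mul_left_cancel₀ hqne e5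
      have hy6 : y6 = C := h56.trans hy5
      have h23 : y2 = y3 := by linear_combination h2 - h3
      have e2 : (1 - 2 * X) * y2 = (1 - 2 * X) * V2 := by
        rw [hV2def, ← mul_assoc, hC, one_mul]
        linear_combination h2 - X * h23 + X * h56 + 2 * X * hy5 + X * hy1
      have hy2 : y2 = V2 := mul_left_cancel₀ hqne e2
      have hy3 : y3 = V2 := h23.symm.trans hy2
      have e4 : (1 - X) * y4 = (1 - X) * V4 := by
        rw [hV4def, ← mul_assoc, hA, one_mul]
        linear_combination h4 + 2 * X * h56 + 4 * X * hy5
      have hy4 : y4 = V4 := mul_left_cancel₀ hpne e4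
      have hyB : yB = BB := by
        rw [hB, hy1, hy2, hy3, hy4, hy5, hy6, hBBdef]
      rw [hy1, hy2, hy3, hy4, hy5, hy6, hyB]
  · intro v₁ v₅ v₆ v₂ v₃ v₄ B h1 h5 h6 h2 h3 h4 hB
    have h56 : v₆ = v₅ := by linear_combination h6 - h5
    have h23 : v₂ = v₃ := by linear_combination h2 - h3
    have e1 : (1 - X) * v₁ = 1 := by linear_combination h1
    have e5 : (1 - 2 * X) * v₅ = 1 := by linear_combination h5 + X * h56
    have e2 : (1 - 2 * X) * v₂ = 1 + 2 * X * v₅ + X * v₁ := by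
      linear_combination h2 - X * h23 + X * h56
    have e4 : (1 - X) * v₄ = 1 + 4 * X * v₅ := by
      linear_combination h4 + 2 * X * h56
    have eB : B = 1 + 4 * X * v₂ + X * v₁ + 4 * X * v₅ + X * v₄ := by
      linear_combination hB - 2 * X * h23 + 2 * X * h56
    have key : (1 - X) * (1 - 2 * X) ^ 2 * B =
        1 + 5 * X - 8 * X ^ 2 - 4 * X ^ 3 := by
      linear_combination ((1 - X) * (1 - 2 * X) ^ 2) * eB +
        (4 * X * (1 - X) * (1 - 2 * X)) * e2 +
        (X * (1 - 2 * X) ^ 2 + 4 * X ^ 2 * (1 - 2 * X)) * e1 +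
        (X * (1 - 2 * X) ^ 2) * e4 +
        (4 * X * (1 - X) * (1 - 2 * X) + 8 * X ^ 2 * (1 - X) +
          4 * X ^ 2 * (1 - 2 * X)) * e5
    linear_combination -key
end

section
/- The generating function of a regular language as counted by word length is rational: if L ⊆ Σ* is accepted by a deterministic finite automaton with state set Q, then the formal power series ∑_{n} |{w ∈ L : |w| = n}|·tⁿ over ℚ is the power series expansion of a rational function p(t)/q(t) with q(0) ≠ 0. -/
open PowerSeries Polynomial Finset

namespace RegGF

variable {α σ : Type} [Fintype α] [Fintype σ] (M : DFA α σ)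

instance wordFinite (n : ℕ) (P : List α → Prop) :
    Finite {w : List α // w.length = n ∧ P w} :=
  Set.Finite.to_subtype <|
    (List.finite_length_eq α n).subset fun w hw => hw.1

noncomputable def cnt (s : σ) (n : ℕ) : ℚ :=
  (Nat.card {w : List α // w.length = n ∧ M.evalFrom s w ∈ M.accept} : ℚ)

open scoped Classical in
theorem cnt_zero (s : σ) : cnt M s 0 = if s ∈ M.accept then 1 else 0 := by
  unfold cnt
  split_ifs with h
  · norm_cast
    haveI : Unique {w : List α // w.length = 0 ∧ M.evalFrom s w ∈ M.accept} :=
      { default := ⟨[], rfl, h⟩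
        uniq := by rintro ⟨w, hw, -⟩; exact Subtype.ext (List.length_eq_zero_iff.mp hw) }
    exact Nat.card_unique
  · norm_cast
    haveI : IsEmpty {w : List α // w.length = 0 ∧ M.evalFrom s w ∈ M.accept} := by
      constructor; rintro ⟨w, hw, hacc⟩
      rw [List.length_eq_zero_iff.mp hw] at hacc
      exact h hacc
    exact Nat.card_of_isEmpty

theorem cnt_succ (s : σ) (n : ℕ) :
    cnt M s (n + 1) = ∑ a : α, cnt M (M.step s a) n := by
  unfold cnt
  push_cast
  congr 1
  have e : {w : List α // w.length = n + 1 ∧ M.evalFrom s w ∈ M.accept} ≃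
      Σ a : α, {w : List α // w.length = n ∧ M.evalFrom (M.step s a) w ∈ M.accept} :=
    { toFun := fun x => match x with
        | ⟨a :: w, hw, hacc⟩ => ⟨a, w, by simpa using hw, hacc⟩
      invFun := fun x => ⟨x.1 :: x.2.1, by simpa using x.2.2.1, x.2.2.2⟩
      left_inv := by
        rintro ⟨(_ | ⟨a, w⟩), hw, hacc⟩
        · simp at hw
        · rfl
      right_inv := by rintro ⟨a, w, hw, hacc⟩; rfl }
  classical
  haveI : ∀ a : α, Fintype {w : List α // w.length = n ∧ M.evalFrom (M.step s a) w ∈ M.accept} :=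
    fun a => Fintype.ofFinite _
  rw [Nat.card_congr e, Nat.card_eq_fintype_card, Fintype.card_sigma]
  norm_num [Nat.card_eq_fintype_card]

end RegGF

namespace Part2
variable {α σ : Type} [Fintype α] [Fintype σ] [DecidableEq σ] (M : DFA α σ)

noncomputable def A : Matrix σ σ ℚ :=
  Matrix.of fun s t => (Nat.card {a : α // M.step s a = t} : ℚ)

open scoped Classical in
noncomputable def v0 : σ → ℚ := fun s => if s ∈ M.accept then 1 else 0

theorem mulVec_A (u : σ → ℚ) (s : σ) :
    (A M).mulVec u s = ∑ a : α, u (M.step s a) := by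
  show ∑ t : σ, (Nat.card {a : α // M.step s a = t} : ℚ) * u t = _
  have key : ∀ t : σ, (Nat.card {a : α // M.step s a = t} : ℚ) * u t
      = ∑ a ∈ Finset.univ.filter (fun a => M.step s a = t), u (M.step s a) := by
    intro t
    rw [Finset.sum_congr rfl (fun a ha => by rw [(Finset.mem_filter.mp ha).2]),
      Finset.sum_const, Nat.card_eq_fintype_card, Fintype.card_subtype]
    simp [mul_comm]
  simp_rw [key]
  rw [Finset.sum_fiberwise_eq_sum_filter]
  simp

theorem cnt_eq (n : ℕ) : ∀ s : σ, RegGF.cnt M s n = ((A M) ^ n).mulVec (v0 M) s := by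
  induction n with
  | zero =>
      intro s
      rw [RegGF.cnt_zero, pow_zero, Matrix.one_mulVec]
      simp [v0]
  | succ n ih =>
      intro s
      rw [RegGF.cnt_succ, pow_succ', ← Matrix.mulVec_mulVec, mulVec_A]
      exact Finset.sum_congr rfl fun a _ => ih (M.step s a)

end Part2

namespace Part3
open Finset
variable {α σ : Type} [Fintype α] [Fintype σ] [DecidableEq σ] (M : DFA α σ)

theorem sum_smul_mulVec {ι : Type*} (s : Finset ι) (g : ι → ℚ)
    (B : ι → Matrix σ σ ℚ) (v : σ → ℚ) (t : σ) :
    ((∑ i ∈ s, g i • B i).mulVec v) t = ∑ i ∈ s, g i * ((B i).mulVec v t) := by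
  simp only [Matrix.mulVec, dotProduct, Finset.sum_apply, Matrix.sum_apply,
    Matrix.smul_apply, smul_eq_mul, Finset.sum_mul, Finset.mul_sum, mul_assoc]
  exact Finset.sum_comm

theorem recur (m : ℕ) :
    ∑ i ∈ Finset.range (Fintype.card σ + 1),
      (Part2.A M).charpoly.coeff i * RegGF.cnt M M.start (m + i) = 0 := by
  have hCH : ∑ i ∈ Finset.range (Fintype.card σ + 1),
      (Part2.A M).charpoly.coeff i • (Part2.A M) ^ i = 0 := by
    have h := Matrix.aeval_self_charpoly (Part2.A M)
    rwa [Polynomial.aeval_eq_sum_range, Matrix.charpoly_natDegree_eq_dim] at h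
  have h2 : ∑ i ∈ Finset.range (Fintype.card σ + 1),
      (Part2.A M).charpoly.coeff i • (Part2.A M) ^ (m + i) = 0 := by
    calc ∑ i ∈ Finset.range (Fintype.card σ + 1),
        (Part2.A M).charpoly.coeff i • (Part2.A M) ^ (m + i)
        = (Part2.A M) ^ m * ∑ i ∈ Finset.range (Fintype.card σ + 1),
            (Part2.A M).charpoly.coeff i • (Part2.A M) ^ i := by
          rw [Finset.mul_sum]
          exact Finset.sum_congr rfl fun i _ => by rw [mul_smul_comm, pow_add]
      _ = 0 := by rw [hCH, mul_zero]
  have h3 := congrFun (congrArg (fun B : Matrix σ σ ℚ => B.mulVec (Part2.v0 M)) h2) M.start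
  simp only [Matrix.zero_mulVec, Pi.zero_apply] at h3
  rw [sum_smul_mulVec] at h3
  rw [← h3]
  exact Finset.sum_congr rfl fun i _ => by rw [Part2.cnt_eq]

end Part3

open Finset in
theorem regular_language_rational_gf {α σ : Type} [Fintype α] [Fintype σ]
    (M : DFA α σ) :
    ∃ p q : Polynomial ℚ, q.coeff 0 ≠ 0 ∧
      (PowerSeries.mk fun n : ℕ =>
          (Nat.card {w : List α // w.length = n ∧ w ∈ M.accepts} : ℚ)) *
        (q : PowerSeries ℚ) = (p : PowerSeries ℚ) := by
  classical
  set d := Fintype.card σ with hd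
  set c : ℕ → ℚ := fun i => (Part2.A M).charpoly.coeff i with hc
  set F : PowerSeries ℚ := PowerSeries.mk fun n : ℕ =>
      (Nat.card {w : List α // w.length = n ∧ w ∈ M.accepts} : ℚ) with hF
  have hf : ∀ n, PowerSeries.coeff n F = RegGF.cnt M M.start n := by
    intro n
    rw [hF, PowerSeries.coeff_mk]
    rfl
  set q : Polynomial ℚ := ∑ j ∈ range (d + 1), Polynomial.C (c (d - j)) * Polynomial.X ^ j
    with hq
  have hcd : c d = 1 := by
    show (Part2.A M).charpoly.coeff (Fintype.card σ) = 1
    conv_lhs => rw [← Matrix.charpoly_natDegree_eq_dim (Part2.A M)]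
    exact (Part2.A M).charpoly_monic.coeff_natDegree
  have hq0 : q.coeff 0 = 1 := by
    rw [hq, Polynomial.finset_sum_coeff]
    rw [Finset.sum_eq_single 0]
    · simpa using hcd
    · intro j _ hj
      simp [Polynomial.coeff_C_mul, Polynomial.coeff_X_pow, Ne.symm hj]
    · simp
  have hcoe : (q : PowerSeries ℚ) =
      ∑ j ∈ range (d + 1), PowerSeries.C (c (d - j)) * PowerSeries.X ^ j := by
    rw [hq, ← Polynomial.coeToPowerSeries.ringHom_apply, map_sum]
    refine Finset.sum_congr rfl fun j _ => ?_
    rw [map_mul, map_pow]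
    simp [Polynomial.coeToPowerSeries.ringHom_apply, Polynomial.coe_C, Polynomial.coe_X]
  have hmul : ∀ n, PowerSeries.coeff n (F * (q : PowerSeries ℚ)) =
      ∑ j ∈ range (d + 1), c (d - j) * (if j ≤ n then PowerSeries.coeff (n - j) F else 0) := by
    intro n
    rw [hcoe, Finset.mul_sum, map_sum]
    refine Finset.sum_congr rfl fun j _ => ?_
    rw [mul_left_comm, PowerSeries.coeff_C_mul, PowerSeries.coeff_mul_X_pow']
  have hvanish : ∀ n, d ≤ n → PowerSeries.coeff n (F * (q : PowerSeries ℚ)) = 0 := by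
    intro n hn
    rw [hmul]
    have step1 : ∑ j ∈ range (d + 1), c (d - j) *
        (if j ≤ n then PowerSeries.coeff (n - j) F else 0)
        = ∑ j ∈ range (d + 1), (fun i => c i * RegGF.cnt M M.start (n - d + i)) (d + 1 - 1 - j) := by
      refine Finset.sum_congr rfl fun j hj => ?_
      have hjd : j ≤ d := Nat.lt_succ_iff.mp (Finset.mem_range.mp hj)
      rw [if_pos (hjd.trans hn), hf]
      simp only [Nat.add_sub_cancel]
      congr 2
      omega
    rw [step1]
    exact (Finset.sum_range_reflect (fun i => c i * RegGF.cnt M M.start (n - d + i))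
      (d + 1)).trans (Part3.recur M (n - d))
  refine ⟨PowerSeries.trunc d (F * (q : PowerSeries ℚ)), q, by rw [hq0]; norm_num, ?_⟩
  ext n
  rw [Polynomial.coeff_coe, PowerSeries.coeff_trunc]
  split_ifs with h
  · rfl
  · exact hvanish n (le_of_not_gt h)
end
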